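/- Let G be a uniformly random tournament on n ≥ 3 labeled vertices and let a, s, b be three distinct vertices. Let A be the event that there is no directed path from a to s and B the event that there is no directed path from s to b. Then (1/2)^(2n-3)·(3 − 2·(1/2)^(n-3)) ≤ P(A ∩ B) ≤ (1/2)^(2n-3)·(3 + 20.8·(7/8)^(n-3)). -/

import Mathlib

/-- A tournament on `Fin n`: an orientation of each edge `{i,j}`, `i < j`, of the complete
graph. `ω ⟨(i,j),h⟩ = true` means the edge is oriented `i → j`. Each of the `2^(n choose 2)`
orientations is equally likely under the uniform probability `Pr`. -/
abbrev Orient (n : ℕ) : Type := {p : Fin n × Fin n // p.1 < p.2} → Bool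

/-- The edge between `i` and `j` is oriented from `i` to `j`. -/
def dir {n : ℕ} (ω : Orient n) (i j : Fin n) : Prop :=
  (∃ h : i < j, ω ⟨(i, j), h⟩ = true) ∨ (∃ h : j < i, ω ⟨(j, i), h⟩ = false)

/-- There is a directed path from `a` to `s` in the tournament `ω`. -/
def reaches {n : ℕ} (ω : Orient n) (a s : Fin n) : Prop :=
  Relation.TransGen (dir ω) a s

/-- The probability of the event `E` for a uniformly random tournament on `n` vertices. -/
noncomputable def Pr (n : ℕ) (E : Orient n → Prop) : ℝ :=
  haveI := Classical.decPred E
  ((Finset.univ.filter E).card : ℝ) / (Fintype.card (Orient n) : ℝ)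

abbrev Edge (n : ℕ) : Type := {p : Fin n × Fin n // p.1 < p.2}

open Finset

section Basics
variable {n : ℕ} {ω : Orient n} {u v : Fin n}

lemma dir_iff (h : u < v) : dir ω u v ↔ ω ⟨(u, v), h⟩ = true := by
  constructor
  · rintro (⟨h', e⟩ | ⟨h', e⟩)
    · exact e
    · exact absurd h' (lt_asymm h)
  · exact fun e => Or.inl ⟨h, e⟩

lemma dir_rev_iff (h : u < v) : dir ω v u ↔ ω ⟨(u, v), h⟩ = false := by
  constructor
  · rintro (⟨h', e⟩ | ⟨h', e⟩)
    · exact absurd h' (lt_asymm h)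
    · exact e
  · exact fun e => Or.inr ⟨h, e⟩

lemma not_dir_self : ¬ dir ω u u := by
  rintro (⟨h', _⟩ | ⟨h', _⟩) <;> exact lt_irrefl _ h'

lemma dir_asymm (h1 : dir ω u v) (h2 : dir ω v u) : False := by
  rcases lt_trichotomy u v with h | h | h
  · rw [dir_iff h] at h1; rw [dir_rev_iff h] at h2; simp [h1] at h2
  · subst h; exact not_dir_self h1
  · rw [dir_rev_iff h] at h1; rw [dir_iff h] at h2; simp [h2] at h1

lemma dir_total (h : u ≠ v) (hnd : ¬ dir ω u v) : dir ω v u := by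
  rcases h.lt_or_gt with h' | h'
  · rw [dir_iff h'] at hnd
    rw [dir_rev_iff h']
    exact Bool.not_eq_true _ ▸ hnd
  · rw [dir_rev_iff h'] at hnd
    rw [dir_iff h']
    simpa using hnd

end Basics

section Count
variable {n : ℕ}

lemma card_fixed (D : Finset (Edge n)) (f : Edge n → Bool) :
    (univ.filter (fun ω : Orient n => ∀ e ∈ D, ω e = f e)).card
      = 2 ^ (Fintype.card (Edge n) - D.card) := by
  classical
  rw [← Fintype.card_subtype]
  have ec : {ω : Orient n // ∀ e ∈ D, ω e = f e} ≃ ({e : Edge n // e ∉ D} → Bool) :=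
    { toFun := fun ω e => ω.1 e.1
      invFun := fun g => ⟨fun e => if h : e ∈ D then f e else g ⟨e, h⟩, fun e he => by
        simp [he]⟩
      left_inv := fun ω => by
        ext e
        by_cases h : e ∈ D
        · simp [h, ω.2 e h]
        · simp [h]
      right_inv := fun g => by
        ext e
        simp [e.2] }
  rw [Fintype.card_congr ec, Fintype.card_fun]
  have h1 : Fintype.card {e : Edge n // e ∉ D} = Fintype.card (Edge n) - D.card := by
    rw [Fintype.card_subtype_compl, Fintype.card_coe]
  rw [h1, Fintype.card_bool]

noncomputable def cnt (E : Orient n → Prop) : ℕ :=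
  haveI := Classical.decPred E
  (univ.filter E).card

lemma cnt_eq (E : Orient n → Prop) [inst : DecidablePred E] :
    cnt E = (univ.filter E).card := by
  unfold cnt
  rw [Finset.filter_congr_decidable]

lemma cnt_mono {E F : Orient n → Prop} (h : ∀ ω, E ω → F ω) : cnt E ≤ cnt F := by
  classical
  rw [cnt_eq, cnt_eq]
  apply card_le_card
  intro ω hw
  simp only [mem_filter, mem_univ, true_and] at *
  exact h _ hw

lemma cnt_le_sum {ι : Type*} [DecidableEq ι] (I : Finset ι) (P : ι → Orient n → Prop)
    (E : Orient n → Prop) (h : ∀ ω, E ω → ∃ p ∈ I, P p ω) :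
    cnt E ≤ ∑ p ∈ I, cnt (P p) := by
  classical
  simp only [cnt_eq]
  calc (univ.filter E).card ≤ (I.biUnion fun p => univ.filter (P p)).card := by
        apply card_le_card
        intro ω hw
        simp only [mem_filter, mem_univ, true_and] at hw
        obtain ⟨p, hp, hP⟩ := h ω hw
        simp only [mem_biUnion, mem_filter, mem_univ, true_and]
        exact ⟨p, hp, hP⟩
    _ ≤ ∑ p ∈ I, (univ.filter (P p)).card := card_biUnion_le

lemma card3 {α : Type*} [DecidableEq α] (A B C : Finset α) :
    A.card + B.card + C.card ≤ (A ∪ B ∪ C).card + ((A ∩ B).card + (A ∩ C).card + (B ∩ C).card) := by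
  have h1 : (A ∪ B).card + (A ∩ B).card = A.card + B.card :=
    card_union_add_card_inter A B
  have h2 : (A ∪ B ∪ C).card + ((A ∪ B) ∩ C).card = (A ∪ B).card + C.card :=
    card_union_add_card_inter _ C
  have h3 : ((A ∪ B) ∩ C).card ≤ (A ∩ C).card + (B ∩ C).card := by
    rw [union_inter_distrib_right]
    exact card_union_le _ _
  omega

lemma cnt_bonferroni (E1 E2 E3 : Orient n → Prop) :
    cnt E1 + cnt E2 + cnt E3 ≤
      cnt (fun ω => E1 ω ∨ E2 ω ∨ E3 ω) +
        (cnt (fun ω => E1 ω ∧ E2 ω) + cnt (fun ω => E1 ω ∧ E3 ω) +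
          cnt (fun ω => E2 ω ∧ E3 ω)) := by
  classical
  simp only [cnt_eq]
  have e1 : (univ.filter fun ω : Orient n => E1 ω ∨ E2 ω ∨ E3 ω)
      = (univ.filter E1) ∪ (univ.filter E2) ∪ (univ.filter E3) := by
    simp [Finset.filter_or, Finset.union_assoc]
  have e2 : ∀ (P Q : Orient n → Prop) [DecidablePred P] [DecidablePred Q],
      (univ.filter fun ω => P ω ∧ Q ω) = (univ.filter P) ∩ (univ.filter Q) := by
    intro P Q _ _
    simp [Finset.filter_and]
  rw [e1, e2, e2, e2]
  exact card3 _ _ _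

lemma Pr_eq (E : Orient n → Prop) :
    Pr n E = (cnt E : ℝ) / 2 ^ (Fintype.card (Edge n)) := by
  unfold Pr cnt
  congr 1
  have : Fintype.card (Orient n) = 2 ^ Fintype.card (Edge n) := by
    rw [Fintype.card_fun, Fintype.card_bool]
  rw [this]
  push_cast
  ring

end Count

section Rank
variable {n : ℕ}

def rEvent (r : Fin n → ℕ) (ω : Orient n) : Prop :=
  ∀ e : Edge n, r e.1.1 ≠ r e.1.2 → ω e = decide (r e.1.2 < r e.1.1)

def rDiff (r : Fin n → ℕ) : Finset (Edge n) :=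
  univ.filter fun e => r e.1.1 ≠ r e.1.2

lemma cnt_congr {E F : Orient n → Prop} (h : ∀ ω, E ω ↔ F ω) : cnt E = cnt F := by
  have : E = F := funext fun ω => propext (h ω)
  rw [this]

lemma cnt_rEvent (r : Fin n → ℕ) :
    cnt (rEvent r) = 2 ^ (Fintype.card (Edge n) - (rDiff r).card) := by
  classical
  have h1 : cnt (rEvent r)
      = cnt (fun ω : Orient n => ∀ e ∈ rDiff r, ω e = decide (r e.1.2 < r e.1.1)) := by
    apply cnt_congr
    intro ω
    constructor
    · intro h e he
      simp only [rDiff, mem_filter, mem_univ, true_and] at he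
      exact h e he
    · intro h e he
      exact h e (by simp [rDiff, mem_filter, he])
  rw [h1, cnt_eq, card_fixed]

lemma rEvent_iff_dir (r : Fin n → ℕ) (ω : Orient n) :
    rEvent r ω ↔ ∀ u v : Fin n, r v < r u → dir ω u v := by
  constructor
  · intro h u v hlt
    have hne : u ≠ v := fun e => by subst e; exact lt_irrefl _ hlt
    rcases hne.lt_or_gt with h' | h'
    · rw [dir_iff h']
      have := h ⟨(u, v), h'⟩ (by simpa using hlt.ne')
      simpa [hlt] using this
    · rw [dir_rev_iff h']
      have := h ⟨(v, u), h'⟩ (by simpa using hlt.ne)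
      simpa [not_lt.mpr hlt.le, Nat.lt_asymm hlt] using this
  · intro h e he
    obtain ⟨⟨x, y⟩, hxy⟩ := e
    simp only at he ⊢
    rcases Nat.lt_or_ge (r y) (r x) with h' | h'
    · have := h x y h'
      rw [dir_iff hxy] at this
      simp [this, h']
    · have hne' : r x ≠ r y := he
      have h'' : r x < r y := lt_of_le_of_ne h' hne'
      have := h y x h''
      rw [dir_rev_iff hxy] at this
      simp [this, Nat.not_lt.mpr h''.le]

def crossSet (X Y : Finset (Fin n)) : Finset (Edge n) :=
  univ.filter fun e => (e.1.1 ∈ X ∧ e.1.2 ∈ Y) ∨ (e.1.1 ∈ Y ∧ e.1.2 ∈ X)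

lemma mem_crossSet {X Y : Finset (Fin n)} {e : Edge n} :
    e ∈ crossSet X Y ↔ (e.1.1 ∈ X ∧ e.1.2 ∈ Y) ∨ (e.1.1 ∈ Y ∧ e.1.2 ∈ X) := by
  simp [crossSet]

lemma crossSet_comm (X Y : Finset (Fin n)) : crossSet X Y = crossSet Y X := by
  ext e; simp [mem_crossSet]; tauto

lemma card_crossSet {X Y : Finset (Fin n)} (h : Disjoint X Y) :
    (crossSet X Y).card = X.card * Y.card := by
  classical
  rw [← Finset.card_product]
  apply Finset.card_bij (fun (e : Edge n) (he : e ∈ crossSet X Y) =>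
    if e.1.1 ∈ X then e.1 else e.1.swap)
  · intro e he
    rw [mem_crossSet] at he
    rcases he with ⟨h1, h2⟩ | ⟨h1, h2⟩
    · simp [h1, h2]
    · have : e.1.1 ∉ X := fun hc => (Finset.disjoint_left.mp h hc) h1
      simp [this, Prod.swap, h1, h2]
  · intro e1 he1 e2 he2 heq
    rw [mem_crossSet] at he1 he2
    have key : ∀ (e : Edge n), e ∈ crossSet X Y →
        (if e.1.1 ∈ X then e.1 else e.1.swap).1 ∈ X ∧
        (if e.1.1 ∈ X then e.1 else e.1.swap) = e.1 ∨
        ¬ (e.1.1 ∈ X) ∧ (if e.1.1 ∈ X then e.1 else e.1.swap) = e.1.swap := by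
      intro e he
      by_cases hx : e.1.1 ∈ X
      · left; constructor; · simpa [hx]
        · simp [hx]
      · right; exact ⟨hx, by simp [hx]⟩
    -- simpler: case analysis
    by_cases hx1 : e1.1.1 ∈ X <;> by_cases hx2 : e2.1.1 ∈ X <;>
      simp only [hx1, hx2, if_pos, if_neg, if_true, if_false] at heq
    · exact Subtype.ext heq
    · -- e1.1 = e2.1.swap : contradiction with both sorted
      exfalso
      have h1 := e1.2
      have h2 := e2.2
      rw [heq] at h1
      simp only [Prod.fst_swap, Prod.snd_swap] at h1
      exact lt_asymm h1 h2
    · exfalso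
      have h1 := e1.2
      have h2 := e2.2
      rw [← heq] at h2
      simp only [Prod.fst_swap, Prod.snd_swap] at h2
      exact lt_asymm h1 h2
    · have : e1.1 = e2.1 := by
        have := congrArg Prod.swap heq
        simpa using this
      exact Subtype.ext this
  · intro p hp
    simp only [Finset.mem_product] at hp
    obtain ⟨hpx, hpy⟩ := hp
    have hne : p.1 ≠ p.2 := by
      intro hc
      exact (Finset.disjoint_left.mp h hpx) (hc ▸ hpy)
    rcases hne.lt_or_gt with h' | h'
    · refine ⟨⟨(p.1, p.2), h'⟩, ?_, ?_⟩
      · rw [mem_crossSet]; left; exact ⟨hpx, hpy⟩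
      · simp [hpx]
    · refine ⟨⟨(p.2, p.1), h'⟩, ?_, ?_⟩
      · rw [mem_crossSet]; right; exact ⟨hpy, hpx⟩
      · have : p.2 ∉ X := fun hc => (Finset.disjoint_left.mp h hc) hpy
        simp [this]

lemma crossSet_disjoint_shared {A B C : Finset (Fin n)} (hAB : Disjoint A B)
    (hAC : Disjoint A C) (hBC : Disjoint B C) :
    Disjoint (crossSet A B) (crossSet A C) := by
  rw [Finset.disjoint_left]
  intro e h1 h2
  rw [mem_crossSet] at h1 h2
  have dAB := Finset.disjoint_left.mp hAB
  have dAC := Finset.disjoint_left.mp hAC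
  have dBC := Finset.disjoint_left.mp hBC
  tauto

lemma crossSet_disjoint_distinct {A B C D : Finset (Fin n)} (hAC : Disjoint A C)
    (hAD : Disjoint A D) (hBC : Disjoint B C) (hBD : Disjoint B D) :
    Disjoint (crossSet A B) (crossSet C D) := by
  rw [Finset.disjoint_left]
  intro e h1 h2
  rw [mem_crossSet] at h1 h2
  have dAC := Finset.disjoint_left.mp hAC
  have dAD := Finset.disjoint_left.mp hAD
  have dBC := Finset.disjoint_left.mp hBC
  have dBD := Finset.disjoint_left.mp hBD
  tauto

end Rank
section Rk
variable {n : ℕ}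

def rk (W X Y : Finset (Fin n)) (v : Fin n) : ℕ :=
  if v ∈ W then 0 else if v ∈ X then 1 else if v ∈ Y then 2 else 3

lemma rk_class (W X Y : Finset (Fin n)) (v : Fin n) :
    (v ∈ W ∧ rk W X Y v = 0) ∨ (v ∉ W ∧ v ∈ X ∧ rk W X Y v = 1) ∨
    (v ∉ W ∧ v ∉ X ∧ v ∈ Y ∧ rk W X Y v = 2) ∨
    (v ∉ W ∧ v ∉ X ∧ v ∉ Y ∧ rk W X Y v = 3) := by
  unfold rk
  by_cases h1 : v ∈ W <;> by_cases h2 : v ∈ X <;> by_cases h3 : v ∈ Y <;> simp [h1, h2, h3]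

lemma rDiff_rk (W X Y : Finset (Fin n)) (hWX : Disjoint W X) (hWY : Disjoint W Y)
    (hXY : Disjoint X Y) :
    rDiff (rk W X Y) =
      crossSet W X ∪ crossSet W Y ∪ crossSet W ((W ∪ X ∪ Y)ᶜ) ∪ crossSet X Y ∪
        crossSet X ((W ∪ X ∪ Y)ᶜ) ∪ crossSet Y ((W ∪ X ∪ Y)ᶜ) := by
  have hcompl : ∀ v : Fin n, v ∈ (W ∪ X ∪ Y)ᶜ ↔ (v ∉ W ∧ v ∉ X ∧ v ∉ Y) := by
    intro v; simp [mem_compl, mem_union, not_or]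
  have hrkW : ∀ v, v ∈ W → rk W X Y v = 0 := by
    intro v h; unfold rk; rw [if_pos h]
  have hrkX : ∀ v, v ∈ X → rk W X Y v = 1 := by
    intro v h; unfold rk
    rw [if_neg (Finset.disjoint_right.mp hWX h), if_pos h]
  have hrkY : ∀ v, v ∈ Y → rk W X Y v = 2 := by
    intro v h; unfold rk
    rw [if_neg (Finset.disjoint_right.mp hWY h), if_neg (Finset.disjoint_right.mp hXY h),
        if_pos h]
  have hrkZ : ∀ v, v ∉ W → v ∉ X → v ∉ Y → rk W X Y v = 3 := by
    intro v h1 h2 h3; unfold rk; rw [if_neg h1, if_neg h2, if_neg h3]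
  ext e
  simp only [rDiff, mem_filter, mem_univ, true_and, mem_union, mem_crossSet, hcompl]
  constructor
  · intro h
    rcases rk_class W X Y e.1.1 with ⟨m1, r1⟩ | ⟨m1a, m1, r1⟩ | ⟨m1a, m1b, m1, r1⟩ | ⟨m1a, m1b, m1c, r1⟩ <;>
      rcases rk_class W X Y e.1.2 with ⟨m2, r2⟩ | ⟨m2a, m2, r2⟩ | ⟨m2a, m2b, m2, r2⟩ | ⟨m2a, m2b, m2c, r2⟩
    · exact absurd (r1.trans r2.symm) h
    · exact Or.inl (Or.inl (Or.inl (Or.inl (Or.inl (Or.inl ⟨m1, m2⟩)))))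
    · exact Or.inl (Or.inl (Or.inl (Or.inl (Or.inr (Or.inl ⟨m1, m2⟩)))))
    · exact Or.inl (Or.inl (Or.inl (Or.inr (Or.inl ⟨m1, m2a, m2b, m2c⟩))))
    · exact Or.inl (Or.inl (Or.inl (Or.inl (Or.inl (Or.inr ⟨m1, m2⟩)))))
    · exact absurd (r1.trans r2.symm) h
    · exact Or.inl (Or.inl (Or.inr (Or.inl ⟨m1, m2⟩)))
    · exact Or.inl (Or.inr (Or.inl ⟨m1, m2a, m2b, m2c⟩))
    · exact Or.inl (Or.inl (Or.inl (Or.inl (Or.inr (Or.inr ⟨m1, m2⟩)))))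
    · exact Or.inl (Or.inl (Or.inr (Or.inr ⟨m1, m2⟩)))
    · exact absurd (r1.trans r2.symm) h
    · exact Or.inr (Or.inl ⟨m1, m2a, m2b, m2c⟩)
    · exact Or.inl (Or.inl (Or.inl (Or.inr (Or.inr ⟨⟨m1a, m1b, m1c⟩, m2⟩))))
    · exact Or.inl (Or.inr (Or.inr ⟨⟨m1a, m1b, m1c⟩, m2⟩))
    · exact Or.inr (Or.inr ⟨⟨m1a, m1b, m1c⟩, m2⟩)
    · exact absurd (r1.trans r2.symm) h
  · intro h
    rcases h with (((((⟨h1, h2⟩ | ⟨h1, h2⟩) | (⟨h1, h2⟩ | ⟨h1, h2⟩)) |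
        (⟨h1, h2a, h2b, h2c⟩ | ⟨⟨h1a, h1b, h1c⟩, h2⟩)) | (⟨h1, h2⟩ | ⟨h1, h2⟩)) |
        (⟨h1, h2a, h2b, h2c⟩ | ⟨⟨h1a, h1b, h1c⟩, h2⟩)) |
        (⟨h1, h2a, h2b, h2c⟩ | ⟨⟨h1a, h1b, h1c⟩, h2⟩)
    · rw [hrkW _ h1, hrkX _ h2]; omega
    · rw [hrkX _ h1, hrkW _ h2]; omega
    · rw [hrkW _ h1, hrkY _ h2]; omega
    · rw [hrkY _ h1, hrkW _ h2]; omega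
    · rw [hrkW _ h1, hrkZ _ h2a h2b h2c]; omega
    · rw [hrkZ _ h1a h1b h1c, hrkW _ h2]; omega
    · rw [hrkX _ h1, hrkY _ h2]; omega
    · rw [hrkY _ h1, hrkX _ h2]; omega
    · rw [hrkX _ h1, hrkZ _ h2a h2b h2c]; omega
    · rw [hrkZ _ h1a h1b h1c, hrkX _ h2]; omega
    · rw [hrkY _ h1, hrkZ _ h2a h2b h2c]; omega
    · rw [hrkZ _ h1a h1b h1c, hrkY _ h2]; omega

set_option maxHeartbeats 2000000 in
lemma d_rk (W X Y : Finset (Fin n)) (hWX : Disjoint W X) (hWY : Disjoint W Y)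
    (hXY : Disjoint X Y) :
    (rDiff (rk W X Y)).card =
      W.card * X.card + W.card * Y.card + W.card * ((W ∪ X ∪ Y)ᶜ).card +
        X.card * Y.card + X.card * ((W ∪ X ∪ Y)ᶜ).card + Y.card * ((W ∪ X ∪ Y)ᶜ).card := by
  classical
  set Z := (W ∪ X ∪ Y)ᶜ with hZ
  have hWZ : Disjoint W Z := by
    rw [Finset.disjoint_left]; intro v hv hvz
    rw [hZ, mem_compl] at hvz; exact hvz (by simp [mem_union, hv])
  have hXZ : Disjoint X Z := by
    rw [Finset.disjoint_left]; intro v hv hvz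
    rw [hZ, mem_compl] at hvz; exact hvz (by simp [mem_union, hv])
  have hYZ : Disjoint Y Z := by
    rw [Finset.disjoint_left]; intro v hv hvz
    rw [hZ, mem_compl] at hvz; exact hvz (by simp [mem_union, hv])
  set C : ℕ → Finset (Fin n) := fun i => if i = 0 then W else if i = 1 then X else if i = 2 then Y else Z with hC
  have hU : ∀ (v : Fin n) (i j : ℕ), i ≤ 3 → j ≤ 3 → v ∈ C i → v ∈ C j → i = j := by
    intro v i j hi hj hvi hvj
    have dWX := Finset.disjoint_left.mp hWX
    have dWY := Finset.disjoint_left.mp hWY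
    have dXY := Finset.disjoint_left.mp hXY
    have dWZ := Finset.disjoint_left.mp hWZ
    have dXZ := Finset.disjoint_left.mp hXZ
    have dYZ := Finset.disjoint_left.mp hYZ
    interval_cases i <;> interval_cases j <;> simp_all [hC]
  have cs_disj : ∀ (i j k l : ℕ), i < j → k < l → j ≤ 3 → l ≤ 3 → (i, j) ≠ (k, l) →
      Disjoint (crossSet (C i) (C j)) (crossSet (C k) (C l)) := by
    intro i j k l hij hkl hj3 hl3 hne
    rw [Finset.disjoint_left]
    intro e h1 h2
    rw [mem_crossSet] at h1 h2
    have hi3 : i ≤ 3 := le_trans hij.le hj3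
    have hk3 : k ≤ 3 := le_trans hkl.le hl3
    rcases h1 with ⟨ha1, ha2⟩ | ⟨ha1, ha2⟩ <;> rcases h2 with ⟨hb1, hb2⟩ | ⟨hb1, hb2⟩
    · have e1 := hU e.1.1 i k hi3 hk3 ha1 hb1
      have e2 := hU e.1.2 j l hj3 hl3 ha2 hb2
      exact hne (by rw [e1, e2])
    · have e1 := hU e.1.1 i l hi3 hl3 ha1 hb1
      have e2 := hU e.1.2 j k hj3 hk3 ha2 hb2
      omega
    · have e1 := hU e.1.1 j k hj3 hk3 ha1 hb1
      have e2 := hU e.1.2 i l hi3 hl3 ha2 hb2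
      omega
    · have e1 := hU e.1.1 j l hj3 hl3 ha1 hb1
      have e2 := hU e.1.2 i k hi3 hk3 ha2 hb2
      exact hne (by rw [e2, e1])
  have eW : W = C 0 := by simp [hC]
  have eX : X = C 1 := by simp [hC]
  have eY : Y = C 2 := by simp [hC]
  have eZ : Z = C 3 := by simp [hC]
  rw [rDiff_rk W X Y hWX hWY hXY, ← hZ]
  rw [eW, eX, eY, eZ]
  rw [card_union_of_disjoint, card_union_of_disjoint, card_union_of_disjoint,
      card_union_of_disjoint, card_union_of_disjoint]
  · rw [card_crossSet (eW ▸ eX ▸ hWX), card_crossSet (eW ▸ eY ▸ hWY),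
        card_crossSet (eW ▸ eZ ▸ hWZ), card_crossSet (eX ▸ eY ▸ hXY),
        card_crossSet (eX ▸ eZ ▸ hXZ), card_crossSet (eY ▸ eZ ▸ hYZ)]
  · exact cs_disj 0 1 0 2 (by norm_num) (by norm_num) (by norm_num) (by norm_num) (by simp)
  · rw [Finset.disjoint_union_left]
    exact ⟨cs_disj 0 1 0 3 (by norm_num) (by norm_num) (by norm_num) (by norm_num) (by simp),
           cs_disj 0 2 0 3 (by norm_num) (by norm_num) (by norm_num) (by norm_num) (by simp)⟩
  · rw [Finset.disjoint_union_left, Finset.disjoint_union_left]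
    exact ⟨⟨cs_disj 0 1 1 2 (by norm_num) (by norm_num) (by norm_num) (by norm_num) (by simp),
            cs_disj 0 2 1 2 (by norm_num) (by norm_num) (by norm_num) (by norm_num) (by simp)⟩,
           cs_disj 0 3 1 2 (by norm_num) (by norm_num) (by norm_num) (by norm_num) (by simp)⟩
  · rw [Finset.disjoint_union_left, Finset.disjoint_union_left, Finset.disjoint_union_left]
    exact ⟨⟨⟨cs_disj 0 1 1 3 (by norm_num) (by norm_num) (by norm_num) (by norm_num) (by simp),
             cs_disj 0 2 1 3 (by norm_num) (by norm_num) (by norm_num) (by norm_num) (by simp)⟩,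
            cs_disj 0 3 1 3 (by norm_num) (by norm_num) (by norm_num) (by norm_num) (by simp)⟩,
           cs_disj 1 2 1 3 (by norm_num) (by norm_num) (by norm_num) (by norm_num) (by simp)⟩
  · rw [Finset.disjoint_union_left, Finset.disjoint_union_left, Finset.disjoint_union_left,
        Finset.disjoint_union_left]
    exact ⟨⟨⟨⟨cs_disj 0 1 2 3 (by norm_num) (by norm_num) (by norm_num) (by norm_num) (by simp),
              cs_disj 0 2 2 3 (by norm_num) (by norm_num) (by norm_num) (by norm_num) (by simp)⟩,
             cs_disj 0 3 2 3 (by norm_num) (by norm_num) (by norm_num) (by norm_num) (by simp)⟩,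
            cs_disj 1 2 2 3 (by norm_num) (by norm_num) (by norm_num) (by norm_num) (by simp)⟩,
           cs_disj 1 3 2 3 (by norm_num) (by norm_num) (by norm_num) (by norm_num) (by simp)⟩

end Rk
section Reach
variable {n : ℕ} {ω : Orient n}

lemma not_reaches_of_sink {c t : Fin n} (hsink : ∀ x, ¬ dir ω c x) : ¬ reaches ω c t := by
  intro h
  induction h with
  | single h => exact hsink _ h
  | tail _ _ ih => exact ih

lemma not_reaches_of_source {c t : Fin n} (hsrc : ∀ x, ¬ dir ω x c) : ¬ reaches ω t c := by
  intro h
  cases h with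
  | single h => exact hsrc _ h
  | tail _ h => exact hsrc _ h

noncomputable def reachSet (ω : Orient n) (a : Fin n) : Finset (Fin n) :=
  @Finset.filter _ (fun v => v = a ∨ reaches ω a v) (Classical.decPred _) Finset.univ

lemma mem_reachSet {a v : Fin n} : v ∈ reachSet ω a ↔ (v = a ∨ reaches ω a v) := by
  unfold reachSet
  simp [Finset.mem_filter]

lemma reachSet_closed {a v u : Fin n} (hv : v ∈ reachSet ω a) (hd : dir ω v u) :
    u ∈ reachSet ω a := by
  rw [mem_reachSet] at hv ⊢
  rcases hv with rfl | hv
  · exact Or.inr (Relation.TransGen.single hd)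
  · exact Or.inr (hv.tail hd)

lemma mem_reachSet_self {a : Fin n} : a ∈ reachSet ω a := mem_reachSet.mpr (Or.inl rfl)

end Reach
section Arith
open Finset

noncomputable def hsum (m : ℕ) : ℝ := ∑ i ∈ range (m + 1), (m.choose i : ℝ) * (1/2) ^ (i * (m - i))

noncomputable def dsum (m : ℕ) : ℝ := ∑ i ∈ Ico 1 m, (m.choose i : ℝ) * (1/2) ^ (i * (m - i))

lemma key_exp {i m : ℕ} (h1 : 1 ≤ i) (h2 : i < m) : m - 1 ≤ i * (m - i) := by
  obtain ⟨d, rfl⟩ : ∃ d, m = i + d + 1 := ⟨m - i - 1, by omega⟩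
  have h3 : i + d + 1 - i = d + 1 := by omega
  rw [h3]
  have h4 : i * (d + 1) = i * d + i := by ring
  have h5 : d ≤ i * d := Nat.le_mul_of_pos_left d h1
  omega

lemma key_exp2 {i m : ℕ} (h1 : 2 ≤ i) (h2 : i + 2 ≤ m) : 2 * (m - 2) ≤ i * (m - i) := by
  obtain ⟨i', rfl⟩ : ∃ i', i = i' + 2 := ⟨i - 2, by omega⟩
  obtain ⟨d', rfl⟩ : ∃ d', m = i' + 2 + (d' + 2) := ⟨m - i' - 4, by omega⟩
  have h3 : i' + 2 + (d' + 2) - (i' + 2) = d' + 2 := by omega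
  have h4 : i' + 2 + (d' + 2) - 2 = i' + d' + 2 := by omega
  rw [h3, h4]
  have h5 : (i' + 2) * (d' + 2) = i' * d' + 2 * i' + 2 * d' + 4 := by ring
  omega

lemma half_pow_le {k l : ℕ} (h : k ≤ l) : ((1:ℝ)/2) ^ l ≤ (1/2) ^ k :=
  pow_le_pow_of_le_one (by norm_num) (by norm_num) h

lemma half_pow_pos (k : ℕ) : (0:ℝ) < (1/2) ^ k := by positivity

lemma sum_choose_le (m : ℕ) (s : Finset ℕ) (hs : s ⊆ range (m + 1)) :
    (∑ i ∈ s, (m.choose i : ℝ)) ≤ 2 ^ m := by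
  have h1 : (∑ i ∈ s, (m.choose i : ℝ)) ≤ ∑ i ∈ range (m + 1), (m.choose i : ℝ) := by
    apply Finset.sum_le_sum_of_subset_of_nonneg hs
    intro i _ _; positivity
  have h2 : (∑ i ∈ range (m + 1), (m.choose i : ℝ)) = 2 ^ m := by
    rw [← Nat.cast_sum]
    rw [Nat.sum_range_choose]
    push_cast
    ring
  linarith

lemma dsum_nonneg (m : ℕ) : 0 ≤ dsum m := by
  apply Finset.sum_nonneg
  intro i _
  positivity

lemma dsum_le_two (m : ℕ) (hm : 1 ≤ m) : dsum m ≤ 2 := by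
  have h1 : dsum m ≤ ∑ i ∈ Ico 1 m, (m.choose i : ℝ) * (1/2) ^ (m - 1) := by
    apply Finset.sum_le_sum
    intro i hi
    rw [Finset.mem_Ico] at hi
    have := half_pow_le (key_exp hi.1 hi.2)
    have hc : (0:ℝ) ≤ (m.choose i : ℝ) := by positivity
    exact mul_le_mul_of_nonneg_left this hc
  have h2 : ∑ i ∈ Ico 1 m, (m.choose i : ℝ) * (1/2) ^ (m - 1)
      = (∑ i ∈ Ico 1 m, (m.choose i : ℝ)) * (1/2) ^ (m - 1) := by
    rw [Finset.sum_mul]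
  have h3 : (∑ i ∈ Ico 1 m, (m.choose i : ℝ)) ≤ 2 ^ m := by
    apply sum_choose_le
    intro i hi
    rw [Finset.mem_Ico] at hi
    rw [Finset.mem_range]
    omega
  have h4 : ((2:ℝ) ^ m) * (1/2) ^ (m - 1) = 2 := by
    have : m = (m - 1) + 1 := by omega
    rw [this, pow_succ]
    rw [one_div, inv_pow]
    field_simp
    simp
  calc dsum m ≤ (∑ i ∈ Ico 1 m, (m.choose i : ℝ)) * (1/2) ^ (m - 1) := by rw [← h2]; exact h1
    _ ≤ 2 ^ m * (1/2) ^ (m - 1) := by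
        apply mul_le_mul_of_nonneg_right h3 (le_of_lt (half_pow_pos _))
    _ = 2 := h4

lemma hsum_eq (m : ℕ) (hm : 1 ≤ m) : hsum m = 2 + dsum m := by
  unfold hsum
  rw [Finset.sum_range_succ]
  have h1 : ∑ i ∈ range m, (m.choose i : ℝ) * (1/2) ^ (i * (m - i))
      = (m.choose 0 : ℝ) * (1/2) ^ (0 * (m - 0)) +
        ∑ i ∈ Ico 1 m, (m.choose i : ℝ) * (1/2) ^ (i * (m - i)) := by
    rw [Finset.range_eq_Ico]
    exact Finset.sum_eq_sum_Ico_succ_bot hm _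
  rw [h1]
  simp [dsum]
  ring

lemma hsum_le_four (m : ℕ) : hsum m ≤ 4 := by
  rcases Nat.eq_zero_or_pos m with rfl | hm
  · unfold hsum; norm_num
  · rw [hsum_eq m hm]
    linarith [dsum_le_two m hm]

lemma hsum_nonneg (m : ℕ) : 0 ≤ hsum m := by
  apply Finset.sum_nonneg; intro i _; positivity

lemma dsum_bound (m : ℕ) (hm : 4 ≤ m) : dsum m ≤ (4 * m + 16) * (1/2) ^ m := by
  have e1 : dsum m = (m.choose 1 : ℝ) * (1/2) ^ (1 * (m - 1)) +
      ∑ i ∈ Ico 2 m, (m.choose i : ℝ) * (1/2) ^ (i * (m - i)) := by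
    unfold dsum
    exact Finset.sum_eq_sum_Ico_succ_bot (by omega) _
  have e2 : ∑ i ∈ Ico 2 m, (m.choose i : ℝ) * (1/2) ^ (i * (m - i))
      = (∑ i ∈ Ico 2 (m - 1), (m.choose i : ℝ) * (1/2) ^ (i * (m - i))) +
        (m.choose (m-1) : ℝ) * (1/2) ^ ((m-1) * (m - (m-1))) := by
    have : m = (m - 1) + 1 := by omega
    nth_rewrite 1 [this]
    exact Finset.sum_Ico_succ_top (by omega) _
  have hmid : ∑ i ∈ Ico 2 (m - 1), (m.choose i : ℝ) * (1/2) ^ (i * (m - i))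
      ≤ 16 * (1/2) ^ m := by
    have h1 : ∀ i ∈ Ico 2 (m - 1), (m.choose i : ℝ) * (1/2) ^ (i * (m - i))
        ≤ (m.choose i : ℝ) * (1/2) ^ (2 * (m - 2)) := by
      intro i hi
      rw [Finset.mem_Ico] at hi
      have := half_pow_le (key_exp2 (m := m) hi.1 (by omega))
      have hc : (0:ℝ) ≤ (m.choose i : ℝ) := by positivity
      exact mul_le_mul_of_nonneg_left this hc
    calc ∑ i ∈ Ico 2 (m - 1), (m.choose i : ℝ) * (1/2) ^ (i * (m - i))
        ≤ ∑ i ∈ Ico 2 (m - 1), (m.choose i : ℝ) * (1/2) ^ (2 * (m - 2)) :=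
          Finset.sum_le_sum h1
      _ = (∑ i ∈ Ico 2 (m - 1), (m.choose i : ℝ)) * (1/2) ^ (2 * (m - 2)) := by
          rw [Finset.sum_mul]
      _ ≤ 2 ^ m * (1/2) ^ (2 * (m - 2)) := by
          apply mul_le_mul_of_nonneg_right _ (le_of_lt (half_pow_pos _))
          refine sum_choose_le m _ ?_
          intro i hi
          rw [Finset.mem_Ico] at hi
          rw [Finset.mem_range]
          omega
      _ = 16 * (1/2) ^ m := by
          rw [one_div, inv_pow, inv_pow]
          rw [show 2 * (m - 2) = 2 * m - 4 by omega]
          rw [inv_eq_one_div, inv_eq_one_div, mul_one_div, mul_one_div,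
            div_eq_div_iff (by positivity) (by positivity)]
          rw [← pow_add, show m + m = 4 + (2 * m - 4) by omega, pow_add]
          norm_num
  have hp : ((1:ℝ)/2) ^ m = (1/2) ^ (m - 1) * (1/2) := by
    rw [← pow_succ]
    congr 1
    omega
  have hfirst : (m.choose 1 : ℝ) * (1/2) ^ (1 * (m - 1)) = 2 * m * (1/2) ^ m := by
    rw [Nat.choose_one_right, one_mul, hp]
    ring
  have hlast : (m.choose (m-1) : ℝ) * (1/2) ^ ((m-1) * (m - (m-1))) = 2 * m * (1/2) ^ m := by
    have h1 : m - (m - 1) = 1 := by omega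
    have h2 : m.choose (m - 1) = m := by
      have := Nat.choose_symm (n := m) (k := 1) (by omega)
      rw [this, Nat.choose_one_right]
    rw [h1, h2, mul_one, hp]
    ring
  rw [e1, e2, hfirst, hlast]
  linarith [hmid]

end Arith
section Arith2
open Finset

lemma geom_bound (m : ℕ) (hm : 4 ≤ m) :
    ((4 * m + 16 : ℝ)) * (1/2) ^ m ≤ 4.16 * (7/8) ^ m := by
  induction m with
  | zero => omega
  | succ k ih =>
    rcases Nat.lt_or_ge k 4 with hk | hk
    · have hk4 : k = 3 := by omega
      subst hk4
      norm_num
    · have ihk := ih hk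
      have hpos : (0:ℝ) < (1/2) ^ k := half_pow_pos k
      rw [pow_succ, pow_succ]
      push_cast
      push_cast at ihk
      nlinarith [hpos, ihk, pow_pos (show (0:ℝ) < 7/8 by norm_num) k]

lemma dsum_le (m : ℕ) : dsum m ≤ 4.16 * (7/8) ^ m := by
  rcases Nat.lt_or_ge m 4 with hm | hm
  · interval_cases m
    · unfold dsum; norm_num
    · unfold dsum; norm_num
    · unfold dsum
      rw [show Ico 1 2 = {1} by rfl]
      norm_num
    · unfold dsum
      rw [show Ico 1 3 = {1, 2} by rfl]
      rw [Finset.sum_insert (by norm_num), Finset.sum_singleton]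
      norm_num
  · calc dsum m ≤ (4 * m + 16) * (1/2) ^ m := dsum_bound m hm
      _ ≤ 4.16 * (7/8) ^ m := geom_bound m hm

lemma exp_id {i j m : ℕ} (hij : i ≤ j) (hjm : j ≤ m) :
    (i + 1) * (j + 1 - i) + (j + 2) * (m + 1 - j) = 2 * m + 3 + j * (m - j) + i * (j - i) := by
  obtain ⟨p, rfl⟩ : ∃ p, j = i + p := ⟨j - i, by omega⟩
  obtain ⟨q, rfl⟩ : ∃ q, m = i + p + q := ⟨m - (i + p), by omega⟩
  have h1 : i + p + 1 - i = p + 1 := by omega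
  have h2 : i + p + q + 1 - (i + p) = q + 1 := by omega
  have h3 : i + p + q - (i + p) = q := by omega
  have h4 : i + p - i = p := by omega
  rw [h1, h2, h3, h4]
  ring

lemma arith_main (m : ℕ) :
    ∑ j ∈ range (m + 1), ∑ i ∈ range (j + 1),
        (m.choose j : ℝ) * (j.choose i : ℝ) * (1/2) ^ ((i + 1) * (j + 1 - i) + (j + 2) * (m + 1 - j))
      ≤ (1/2) ^ (2 * m + 3) * (3 + 20.8 * (7/8) ^ m) := by
  have hterm : ∀ j ∈ range (m + 1), ∀ i ∈ range (j + 1),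
      (m.choose j : ℝ) * (j.choose i : ℝ) * (1/2) ^ ((i + 1) * (j + 1 - i) + (j + 2) * (m + 1 - j))
        = (1/2) ^ (2 * m + 3) * ((m.choose j : ℝ) * (1/2) ^ (j * (m - j)) * ((j.choose i : ℝ) * (1/2) ^ (i * (j - i)))) := by
    intro j hj i hi
    rw [Finset.mem_range] at hj hi
    rw [exp_id (by omega) (by omega), pow_add, pow_add]
    ring
  have hsum_eq2 : ∑ j ∈ range (m + 1), ∑ i ∈ range (j + 1),
      (m.choose j : ℝ) * (j.choose i : ℝ) * (1/2) ^ ((i + 1) * (j + 1 - i) + (j + 2) * (m + 1 - j))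
      = (1/2) ^ (2 * m + 3) * ∑ j ∈ range (m + 1), (m.choose j : ℝ) * (1/2) ^ (j * (m - j)) * hsum j := by
    rw [Finset.mul_sum]
    apply Finset.sum_congr rfl
    intro j hj
    rw [Finset.sum_congr rfl (hterm j hj), ← Finset.mul_sum, ← Finset.mul_sum, hsum]
  rw [hsum_eq2]
  apply mul_le_mul_of_nonneg_left _ (le_of_lt (half_pow_pos _))
  -- now: ∑ j ∈ range (m+1), choose * (1/2)^(j*(m-j)) * hsum j ≤ 3 + 20.8 * (7/8)^m
  rcases Nat.eq_zero_or_pos m with rfl | hm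
  · simp [hsum]
    norm_num
  · have split1 : ∑ j ∈ range (m + 1), (m.choose j : ℝ) * (1/2) ^ (j * (m - j)) * hsum j
        = (m.choose 0 : ℝ) * (1/2) ^ (0 * (m - 0)) * hsum 0 +
          (∑ j ∈ Ico 1 m, (m.choose j : ℝ) * (1/2) ^ (j * (m - j)) * hsum j) +
          (m.choose m : ℝ) * (1/2) ^ (m * (m - m)) * hsum m := by
      rw [Finset.sum_range_succ]
      congr 1
      rw [Finset.range_eq_Ico]
      exact Finset.sum_eq_sum_Ico_succ_bot hm _
    rw [split1]
    have h0 : (m.choose 0 : ℝ) * (1/2) ^ (0 * (m - 0)) * hsum 0 = 1 := by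
      simp [hsum]
    have hm' : (m.choose m : ℝ) * (1/2) ^ (m * (m - m)) * hsum m = 2 + dsum m := by
      simp [Nat.choose_self, hsum_eq m hm]
    have hmidb : ∑ j ∈ Ico 1 m, (m.choose j : ℝ) * (1/2) ^ (j * (m - j)) * hsum j
        ≤ 4 * dsum m := by
      rw [dsum, Finset.mul_sum]
      apply Finset.sum_le_sum
      intro j _
      have h4 := hsum_le_four j
      have hn := hsum_nonneg j
      have hc : (0:ℝ) ≤ (m.choose j : ℝ) * (1/2) ^ (j * (m - j)) := by positivity
      nlinarith
    have hd := dsum_le m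
    rw [h0, hm']
    linarith

end Arith2
section RkVals
variable {n : ℕ} {W X Y : Finset (Fin n)} {v : Fin n}

lemma rk_eq_zero (h : v ∈ W) : rk W X Y v = 0 := by unfold rk; rw [if_pos h]

lemma rk_eq_one (h1 : v ∉ W) (h2 : v ∈ X) : rk W X Y v = 1 := by
  unfold rk; rw [if_neg h1, if_pos h2]

lemma rk_eq_two (h1 : v ∉ W) (h2 : v ∉ X) (h3 : v ∈ Y) : rk W X Y v = 2 := by
  unfold rk; rw [if_neg h1, if_neg h2, if_pos h3]

lemma rk_pos (h : v ∉ W) : 0 < rk W X Y v := by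
  unfold rk; rw [if_neg h]; split_ifs <;> norm_num

end RkVals

section LowerSem
variable {n : ℕ} {ω : Orient n} {a s b : Fin n}

/-- From the event `C1` (a sink, b source): both no-path events hold. -/
lemma C1_implies (has : a ≠ s) (hab : a ≠ b) (hsb : s ≠ b)
    (h : rEvent (rk {a} (Finset.univ \ {a, b}) {b}) ω) :
    ¬ reaches ω a s ∧ ¬ reaches ω s b := by
  have hdir := (rEvent_iff_dir _ ω).mp h
  have hsink : ∀ x, ¬ dir ω a x := by
    intro x hx
    by_cases hxa : x = a
    · subst hxa; exact not_dir_self hx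
    · have : dir ω x a := by
        apply hdir
        rw [rk_eq_zero (Finset.mem_singleton_self a)]
        exact rk_pos (by simp [hxa])
      exact dir_asymm hx this
  have hsrc : ∀ x, ¬ dir ω x b := by
    intro x hx
    by_cases hxb : x = b
    · subst hxb; exact not_dir_self hx
    · have : dir ω b x := by
        apply hdir
        have hb2 : rk {a} (Finset.univ \ {a, b}) {b} b = 2 :=
          rk_eq_two (by simp [Ne.symm hab]) (by simp) (Finset.mem_singleton_self b)
        rw [hb2]
        by_cases hxa : x = a
        · rw [hxa, rk_eq_zero (Finset.mem_singleton_self a)]; norm_num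
        · rw [rk_eq_one (by simp [hxa]) (by simp [hxa, hxb])]; norm_num
      exact dir_asymm hx this
  exact ⟨not_reaches_of_sink hsink, not_reaches_of_source hsrc⟩

/-- From the event `C2` (a sink, everything else beats s): both no-path events hold. -/
lemma C2_implies (has : a ≠ s) (hab : a ≠ b) (hsb : s ≠ b)
    (h : rEvent (rk {a} {s} (Finset.univ \ {a, s})) ω) :
    ¬ reaches ω a s ∧ ¬ reaches ω s b := by
  have hdir := (rEvent_iff_dir _ ω).mp h
  have hsink : ∀ x, ¬ dir ω a x := by
    intro x hx
    by_cases hxa : x = a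
    · subst hxa; exact not_dir_self hx
    · have : dir ω x a := by
        apply hdir
        rw [rk_eq_zero (Finset.mem_singleton_self a)]
        exact rk_pos (by simp [hxa])
      exact dir_asymm hx this
  have houts : ∀ x, dir ω s x → x = a := by
    intro x hx
    by_contra hxa
    by_cases hxs : x = s
    · subst hxs; exact not_dir_self hx
    · have : dir ω x s := by
        apply hdir
        have hs1 : rk ({a} : Finset (Fin n)) {s} (Finset.univ \ {a, s}) s = 1 :=
          rk_eq_one (by simp [Ne.symm has]) (Finset.mem_singleton_self s)
        rw [hs1, rk_eq_two (by simp [hxa]) (by simp [hxs]) (by simp [hxa, hxs])]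
        norm_num
      exact dir_asymm hx this
  have key : ∀ y, reaches ω s y → y = a := by
    intro y h
    induction h with
    | single h => exact houts _ h
    | tail _ hstep ih =>
        rw [ih] at hstep
        exact absurd hstep (hsink _)
  exact ⟨not_reaches_of_sink hsink, fun h => hab (key b h).symm⟩

/-- From the event `C3` (b source, s beats everything else): both no-path events hold. -/
lemma C3_implies (has : a ≠ s) (hab : a ≠ b) (hsb : s ≠ b)
    (h : rEvent (rk (Finset.univ \ {s, b}) {s} {b}) ω) :
    ¬ reaches ω a s ∧ ¬ reaches ω s b := by
  have hdir := (rEvent_iff_dir _ ω).mp h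
  have hsrc : ∀ x, ¬ dir ω x b := by
    intro x hx
    by_cases hxb : x = b
    · subst hxb; exact not_dir_self hx
    · have : dir ω b x := by
        apply hdir
        have hb2 : rk (Finset.univ \ {s, b}) {s} ({b} : Finset (Fin n)) b = 2 :=
          rk_eq_two (by simp) (by simp [Ne.symm hsb]) (Finset.mem_singleton_self b)
        rw [hb2]
        by_cases hxs : x = s
        · rw [hxs, rk_eq_one (by simp) (Finset.mem_singleton_self s)]; norm_num
        · rw [rk_eq_zero (by simp [hxs, hxb])]; norm_num
      exact dir_asymm hx this
  have hins : ∀ x, dir ω x s → x = b := by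
    intro x hx
    by_contra hxb
    by_cases hxs : x = s
    · subst hxs; exact not_dir_self hx
    · have : dir ω s x := by
        apply hdir
        rw [rk_eq_zero (by simp [hxs, hxb]),
          rk_eq_one (by simp) (Finset.mem_singleton_self s)]
        norm_num
      exact dir_asymm hx this
  have hA : ¬ reaches ω a s := by
    intro h
    cases h with
    | single h => exact hab (hins _ h)
    | tail h1 h2 =>
        rw [hins _ h2] at h1
        exact not_reaches_of_source hsrc h1
  exact ⟨hA, not_reaches_of_source hsrc⟩

/-- `C1 ∧ C2` implies the 4-class rank event a < s < rest < b. -/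
lemma C12_implies (has : a ≠ s) (hab : a ≠ b) (hsb : s ≠ b)
    (h1 : rEvent (rk {a} (Finset.univ \ {a, b}) {b}) ω)
    (h2 : rEvent (rk {a} {s} (Finset.univ \ {a, s})) ω) :
    rEvent (rk {a} {s} (Finset.univ \ {a, s, b})) ω := by
  have hd1 := (rEvent_iff_dir _ ω).mp h1
  have hd2 := (rEvent_iff_dir _ ω).mp h2
  rw [rEvent_iff_dir]
  intro u v hlt
  rcases rk_class ({a} : Finset (Fin n)) {s} (Finset.univ \ {a, s, b}) u with
    ⟨m1, r1⟩ | ⟨m1a, m1, r1⟩ | ⟨m1a, m1b, m1, r1⟩ | ⟨m1a, m1b, m1c, r1⟩ <;>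
    rcases rk_class ({a} : Finset (Fin n)) {s} (Finset.univ \ {a, s, b}) v with
      ⟨m2, r2⟩ | ⟨m2a, m2, r2⟩ | ⟨m2a, m2b, m2, r2⟩ | ⟨m2a, m2b, m2c, r2⟩ <;>
    rw [r1, r2] at hlt <;> try omega
  · -- (1,0) : u = s, v = a
    rw [Finset.mem_singleton.mp m1, Finset.mem_singleton.mp m2]
    apply hd2
    rw [rk_eq_zero (Finset.mem_singleton_self a),
      rk_eq_one (by simp [Ne.symm has]) (Finset.mem_singleton_self s)]
    norm_num
  · -- (2,0) : u ∈ rest, v = a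
    rw [Finset.mem_singleton.mp m2]
    apply hd1
    rw [rk_eq_zero (Finset.mem_singleton_self a)]
    exact rk_pos m1a
  · -- (2,1) : u ∈ rest, v = s
    have hm := Finset.mem_sdiff.mp m1
    simp only [Finset.mem_insert, Finset.mem_singleton, not_or] at hm
    rw [Finset.mem_singleton.mp m2]
    apply hd2
    rw [rk_eq_one (by simp [Ne.symm has]) (Finset.mem_singleton_self s),
      rk_eq_two m1a m1b (by simp [hm.2.1, hm.2.2.1])]
    norm_num
  · -- (3,0) : u = b, v = a
    have hua : u ≠ a := by simpa using m1a
    have hus : u ≠ s := by simpa using m1b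
    have hub : u = b := by
      by_contra hc
      exact m1c (by simp [hua, hus, hc])
    rw [hub, Finset.mem_singleton.mp m2]
    apply hd1
    rw [rk_eq_zero (Finset.mem_singleton_self a)]
    exact rk_pos (by simp [Ne.symm hab])
  · -- (3,1) : u = b, v = s
    have hua : u ≠ a := by simpa using m1a
    have hus : u ≠ s := by simpa using m1b
    have hub : u = b := by
      by_contra hc
      exact m1c (by simp [hua, hus, hc])
    rw [hub, Finset.mem_singleton.mp m2]
    apply hd2
    rw [rk_eq_one (by simp [Ne.symm has]) (Finset.mem_singleton_self s),
      rk_eq_two (by simp [Ne.symm hab]) (by simp [Ne.symm hsb]) (by simp [Ne.symm hab, Ne.symm hsb])]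
    norm_num
  · -- (3,2) : u = b, v ∈ rest
    have hua : u ≠ a := by simpa using m1a
    have hus : u ≠ s := by simpa using m1b
    have hub : u = b := by
      by_contra hc
      exact m1c (by simp [hua, hus, hc])
    have hm := Finset.mem_sdiff.mp m2
    simp only [Finset.mem_insert, Finset.mem_singleton, not_or] at hm
    rw [hub]
    apply hd1
    rw [rk_eq_two (by simp [Ne.symm hab]) (by simp) (Finset.mem_singleton_self b),
      rk_eq_one (by simp [hm.2.1]) (by simp [hm.2.1, hm.2.2.2])]
    norm_num

/-- `C1 ∧ C3` implies the 4-class rank event a < rest < s < b. -/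
lemma C13_implies (has : a ≠ s) (hab : a ≠ b) (hsb : s ≠ b)
    (h1 : rEvent (rk {a} (Finset.univ \ {a, b}) {b}) ω)
    (h3 : rEvent (rk (Finset.univ \ {s, b}) {s} {b}) ω) :
    rEvent (rk {a} (Finset.univ \ {a, s, b}) {s}) ω := by
  have hd1 := (rEvent_iff_dir _ ω).mp h1
  have hd3 := (rEvent_iff_dir _ ω).mp h3
  rw [rEvent_iff_dir]
  intro u v hlt
  rcases rk_class ({a} : Finset (Fin n)) (Finset.univ \ {a, s, b}) {s} u with
    ⟨m1, r1⟩ | ⟨m1a, m1, r1⟩ | ⟨m1a, m1b, m1, r1⟩ | ⟨m1a, m1b, m1c, r1⟩ <;>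
    rcases rk_class ({a} : Finset (Fin n)) (Finset.univ \ {a, s, b}) {s} v with
      ⟨m2, r2⟩ | ⟨m2a, m2, r2⟩ | ⟨m2a, m2b, m2, r2⟩ | ⟨m2a, m2b, m2c, r2⟩ <;>
    rw [r1, r2] at hlt <;> try omega
  · -- (1,0) : u ∈ rest, v = a : C1
    rw [Finset.mem_singleton.mp m2]
    apply hd1
    rw [rk_eq_zero (Finset.mem_singleton_self a)]
    exact rk_pos m1a
  · -- (2,0) : u = s, v = a : C1
    rw [Finset.mem_singleton.mp m1, Finset.mem_singleton.mp m2]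
    apply hd1
    rw [rk_eq_zero (Finset.mem_singleton_self a)]
    exact rk_pos (by simp [Ne.symm has])
  · -- (2,1) : u = s, v ∈ rest : C3 (s beats rest)
    have hm := Finset.mem_sdiff.mp m2
    simp only [Finset.mem_insert, Finset.mem_singleton, not_or] at hm
    rw [Finset.mem_singleton.mp m1]
    apply hd3
    rw [rk_eq_zero (by simp [hm.2.2.1, hm.2.2.2]),
      rk_eq_one (by simp) (Finset.mem_singleton_self s)]
    norm_num
  · -- (3,0) : u = b, v = a : C1
    have hua : u ≠ a := by simpa using m1a
    have hus : u ≠ s := by simpa using m1c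
    have hub : u = b := by
      by_contra hc
      exact m1b (by simp [hua, hus, hc])
    rw [hub, Finset.mem_singleton.mp m2]
    apply hd1
    rw [rk_eq_zero (Finset.mem_singleton_self a)]
    exact rk_pos (by simp [Ne.symm hab])
  · -- (3,1) : u = b, v ∈ rest : C1 (b source)
    have hua : u ≠ a := by simpa using m1a
    have hus : u ≠ s := by simpa using m1c
    have hub : u = b := by
      by_contra hc
      exact m1b (by simp [hua, hus, hc])
    have hm := Finset.mem_sdiff.mp m2
    simp only [Finset.mem_insert, Finset.mem_singleton, not_or] at hm
    rw [hub]
    apply hd1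
    rw [rk_eq_two (by simp [Ne.symm hab]) (by simp) (Finset.mem_singleton_self b),
      rk_eq_one (by simp [hm.2.1]) (by simp [hm.2.1, hm.2.2.2])]
    norm_num
  · -- (3,2) : u = b, v = s : C3
    have hua : u ≠ a := by simpa using m1a
    have hus : u ≠ s := by simpa using m1c
    have hub : u = b := by
      by_contra hc
      exact m1b (by simp [hua, hus, hc])
    rw [hub, Finset.mem_singleton.mp m2]
    apply hd3
    rw [rk_eq_one (by simp) (Finset.mem_singleton_self s),
      rk_eq_two (by simp) (by simp [Ne.symm hsb]) (Finset.mem_singleton_self b)]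
    norm_num

/-- For `n ≥ 4`, `C2 ∧ C3` is impossible. -/
lemma C23_empty (has : a ≠ s) (hab : a ≠ b) (hsb : s ≠ b) (v : Fin n)
    (hva : v ≠ a) (hvs : v ≠ s) (hvb : v ≠ b)
    (h2 : rEvent (rk {a} {s} (Finset.univ \ {a, s})) ω)
    (h3 : rEvent (rk (Finset.univ \ {s, b}) {s} {b}) ω) : False := by
  have hd2 := (rEvent_iff_dir _ ω).mp h2
  have hd3 := (rEvent_iff_dir _ ω).mp h3
  have hvs' : dir ω v s := by
    apply hd2
    rw [rk_eq_one (by simp [Ne.symm has]) (Finset.mem_singleton_self s),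
      rk_eq_two (by simp [hva]) (by simp [hvs]) (by simp [hva, hvs])]
    norm_num
  have hsv : dir ω s v := by
    apply hd3
    rw [rk_eq_zero (by simp [hvs, hvb]), rk_eq_one (by simp) (Finset.mem_singleton_self s)]
    norm_num
  exact dir_asymm hvs' hsv

end LowerSem
section LowerBound
open Finset

lemma half_mul_pow {d M : ℕ} (h : d ≤ M) : ((1:ℝ)/2)^d * 2^M = 2^(M-d) := by
  rw [one_div, inv_pow]
  have h2 : (2:ℝ)^M = 2^d * 2^(M-d) := by rw [← pow_add]; congr 1; omega
  rw [h2, inv_mul_cancel_left₀ (by positivity)]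

lemma rDiff_card_le {n : ℕ} (r : Fin n → ℕ) : (rDiff r).card ≤ Fintype.card (Edge n) := by
  rw [← Finset.card_univ]
  exact Finset.card_le_univ _

set_option maxHeartbeats 1000000 in
lemma lower_bound (n : ℕ) (hn : 3 ≤ n) (a s b : Fin n)
    (has : a ≠ s) (hab : a ≠ b) (hsb : s ≠ b) :
    ((1 : ℝ) / 2) ^ (2 * n - 3) * (3 - 2 * (1 / 2) ^ (n - 3)) ≤
      Pr n (fun ω => ¬ reaches ω a s ∧ ¬ reaches ω s b) := by
  classical
  set M := Fintype.card (Edge n) with hM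
  have hU : ∀ (F : Finset (Fin n)), (univ \ F).card = n - F.card := by
    intro F
    rw [card_sdiff_of_subset (subset_univ _), card_univ, Fintype.card_fin]
  have hcab : ({a, b} : Finset (Fin n)).card = 2 := by
    rw [card_insert_of_notMem (by simp [hab]), card_singleton]
  have hcas : ({a, s} : Finset (Fin n)).card = 2 := by
    rw [card_insert_of_notMem (by simp [has]), card_singleton]
  have hcsb : ({s, b} : Finset (Fin n)).card = 2 := by
    rw [card_insert_of_notMem (by simp [hsb]), card_singleton]
  have hcasb : ({a, s, b} : Finset (Fin n)).card = 3 := by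
    rw [card_insert_of_notMem (by simp [has, hab]),
      card_insert_of_notMem (by simp [hsb]), card_singleton]
  -- event E1 : a sink, b source
  have hd1 : (rDiff (rk {a} (univ \ {a, b}) {b})).card = 2 * n - 3 := by
    rw [d_rk _ _ _ (by simp [Finset.disjoint_left])
      (by simp [Finset.disjoint_left, hab]) (by simp [Finset.disjoint_left])]
    have hc : (({a} : Finset (Fin n)) ∪ (univ \ {a, b}) ∪ {b})ᶜ = ∅ := by
      ext v
      simp only [mem_compl, mem_union, mem_sdiff, mem_univ, true_and, mem_singleton,
        mem_insert, not_or, Finset.notMem_empty, iff_false, not_and, not_not]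
      tauto
    rw [hc, hU, hcab, card_singleton, card_singleton, card_empty]
    omega
  -- event E2 : a sink, s sink among the rest
  have hd2 : (rDiff (rk {a} {s} (univ \ {a, s}))).card = 2 * n - 3 := by
    rw [d_rk _ _ _ (by simp [Finset.disjoint_left, has])
      (by simp [Finset.disjoint_left]) (by simp [Finset.disjoint_left])]
    have hc : (({a} : Finset (Fin n)) ∪ {s} ∪ (univ \ {a, s}))ᶜ = ∅ := by
      ext v
      simp only [mem_compl, mem_union, mem_sdiff, mem_univ, true_and, mem_singleton,
        mem_insert, not_or, Finset.notMem_empty, iff_false, not_and, not_not]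
      tauto
    rw [hc, hU, hcas, card_singleton, card_singleton, card_empty]
    omega
  -- event E3 : b source, s source among the rest
  have hd3 : (rDiff (rk (univ \ {s, b}) {s} {b})).card = 2 * n - 3 := by
    rw [d_rk _ _ _ (by rw [Finset.disjoint_left]; intro x hx hx'; simp at hx hx'; tauto)
      (by rw [Finset.disjoint_left]; intro x hx hx'; simp at hx hx'; tauto)
      (by simp [Finset.disjoint_left, hsb])]
    have hc : ((univ \ {s, b}) ∪ ({s} : Finset (Fin n)) ∪ {b})ᶜ = ∅ := by
      ext v
      simp only [mem_compl, mem_union, mem_sdiff, mem_univ, true_and, mem_singleton,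
        mem_insert, not_or, Finset.notMem_empty, iff_false, not_and, not_not]
      tauto
    rw [hc, hU, hcsb, card_singleton, card_singleton, card_empty]
    omega
  have hcnt1 : cnt (rEvent (rk {a} (univ \ {a, b}) {b})) = 2 ^ (M - (2 * n - 3)) := by
    rw [cnt_rEvent, hd1]
  have hcnt2 : cnt (rEvent (rk {a} {s} (univ \ {a, s}))) = 2 ^ (M - (2 * n - 3)) := by
    rw [cnt_rEvent, hd2]
  have hcnt3 : cnt (rEvent (rk (univ \ {s, b}) {s} {b})) = 2 ^ (M - (2 * n - 3)) := by
    rw [cnt_rEvent, hd3]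
  have hd1le : 2 * n - 3 ≤ M := by rw [← hd1]; exact rDiff_card_le _
  have hmono1 : cnt (rEvent (rk {a} (univ \ {a, b}) {b}))
      ≤ cnt (fun ω => ¬ reaches ω a s ∧ ¬ reaches ω s b) :=
    cnt_mono (fun ω h => C1_implies has hab hsb h)
  rw [Pr_eq, ← hM]
  rw [le_div_iff₀ (by positivity)]
  rcases Nat.eq_or_lt_of_le hn with hn3 | hn4
  · -- n = 3
    have h3 : n - 3 = 0 := by omega
    have keyN : 2 ^ (M - (2 * n - 3)) ≤ cnt (fun ω => ¬ reaches ω a s ∧ ¬ reaches ω s b) := by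
      rw [← hcnt1]; exact hmono1
    have key : (2:ℝ) ^ (M - (2 * n - 3)) ≤ (cnt (fun ω => ¬ reaches ω a s ∧ ¬ reaches ω s b) : ℝ) := by
      exact_mod_cast keyN
    calc ((1:ℝ)/2) ^ (2 * n - 3) * (3 - 2 * (1/2) ^ (n - 3)) * 2 ^ M
        = (1/2) ^ (2 * n - 3) * 2 ^ M := by rw [h3]; ring
      _ = 2 ^ (M - (2 * n - 3)) := half_mul_pow hd1le
      _ ≤ _ := key
  · -- n ≥ 4
    have hd12 : (rDiff (rk {a} {s} (univ \ {a, s, b}))).card = 3 * n - 6 := by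
      rw [d_rk _ _ _ (by simp [Finset.disjoint_left, has])
        (by simp [Finset.disjoint_left]) (by simp [Finset.disjoint_left])]
      have hc : (({a} : Finset (Fin n)) ∪ {s} ∪ (univ \ {a, s, b}))ᶜ = {b} := by
        ext v
        simp only [mem_compl, mem_union, mem_sdiff, mem_univ, true_and, mem_singleton,
          mem_insert, not_or]
        by_cases h1 : v = a <;> by_cases h2 : v = s <;> by_cases h3 : v = b <;>
          simp [h1, h2, h3, hab, has, hsb, Ne.symm hab, Ne.symm has, Ne.symm hsb]
      rw [hc, hU, hcasb, card_singleton, card_singleton, card_singleton]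
      omega
    have hd13 : (rDiff (rk {a} (univ \ {a, s, b}) {s})).card = 3 * n - 6 := by
      rw [d_rk _ _ _ (by simp [Finset.disjoint_left])
        (by simp [Finset.disjoint_left, has])
        (by rw [Finset.disjoint_left]; intro x hx hx'; simp at hx hx'; tauto)]
      have hc : (({a} : Finset (Fin n)) ∪ (univ \ {a, s, b}) ∪ {s})ᶜ = {b} := by
        ext v
        simp only [mem_compl, mem_union, mem_sdiff, mem_univ, true_and, mem_singleton,
          mem_insert, not_or]
        by_cases h1 : v = a <;> by_cases h2 : v = s <;> by_cases h3 : v = b <;>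
          simp [h1, h2, h3, hab, has, hsb, Ne.symm hab, Ne.symm has, Ne.symm hsb]
      rw [hc, hU, hcasb, card_singleton, card_singleton, card_singleton]
      omega
    have hd12le : 3 * n - 6 ≤ M := by rw [← hd12]; exact rDiff_card_le _
    have h12 : cnt (fun ω => rEvent (rk {a} (univ \ {a, b}) {b}) ω ∧
        rEvent (rk {a} {s} (univ \ {a, s})) ω) ≤ 2 ^ (M - (3 * n - 6)) := by
      calc _ ≤ cnt (rEvent (rk {a} {s} (univ \ {a, s, b}))) :=
            cnt_mono (fun ω h => C12_implies has hab hsb h.1 h.2)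
        _ = 2 ^ (M - (3 * n - 6)) := by rw [cnt_rEvent, hd12]
    have h13 : cnt (fun ω => rEvent (rk {a} (univ \ {a, b}) {b}) ω ∧
        rEvent (rk (univ \ {s, b}) {s} {b}) ω) ≤ 2 ^ (M - (3 * n - 6)) := by
      calc _ ≤ cnt (rEvent (rk {a} (univ \ {a, s, b}) {s})) :=
            cnt_mono (fun ω h => C13_implies has hab hsb h.1 h.2)
        _ = 2 ^ (M - (3 * n - 6)) := by rw [cnt_rEvent, hd13]
    have h23 : cnt (fun ω => rEvent (rk {a} {s} (univ \ {a, s})) ω ∧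
        rEvent (rk (univ \ {s, b}) {s} {b}) ω) = 0 := by
      have hne : (univ \ ({a, s, b} : Finset (Fin n))).Nonempty := by
        apply Finset.card_pos.mp
        rw [hU, hcasb]
        omega
      obtain ⟨v, hv⟩ := hne
      simp only [mem_sdiff, mem_univ, true_and, mem_insert, mem_singleton, not_or] at hv
      have : cnt (fun ω => rEvent (rk {a} {s} (univ \ {a, s})) ω ∧
          rEvent (rk (univ \ {s, b}) {s} {b}) ω) ≤ cnt (fun _ : Orient n => False) :=
        cnt_mono (fun ω h => C23_empty has hab hsb v hv.1 hv.2.1 hv.2.2 h.1 h.2)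
      have hzero : cnt (fun _ : Orient n => False) = 0 := by
        rw [cnt_eq]
        simp
      omega
    have hun : cnt (fun ω => rEvent (rk {a} (univ \ {a, b}) {b}) ω ∨
        rEvent (rk {a} {s} (univ \ {a, s})) ω ∨ rEvent (rk (univ \ {s, b}) {s} {b}) ω)
        ≤ cnt (fun ω => ¬ reaches ω a s ∧ ¬ reaches ω s b) := by
      apply cnt_mono
      rintro ω (h | h | h)
      · exact C1_implies has hab hsb h
      · exact C2_implies has hab hsb h
      · exact C3_implies has hab hsb h
    have hbon := cnt_bonferroni (rEvent (rk {a} (univ \ {a, b}) {b}))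
      (rEvent (rk {a} {s} (univ \ {a, s}))) (rEvent (rk (univ \ {s, b}) {s} {b}))
    rw [hcnt1, hcnt2, hcnt3] at hbon
    have key : 3 * 2 ^ (M - (2 * n - 3)) ≤
        cnt (fun ω => ¬ reaches ω a s ∧ ¬ reaches ω s b) + 2 * 2 ^ (M - (3 * n - 6)) := by
      omega
    have keyR : (3:ℝ) * 2 ^ (M - (2 * n - 3)) - 2 * 2 ^ (M - (3 * n - 6)) ≤
        (cnt (fun ω => ¬ reaches ω a s ∧ ¬ reaches ω s b) : ℝ) := by
      have := key
      have hcast : ((3 * 2 ^ (M - (2 * n - 3)) : ℕ) : ℝ) ≤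
          ((cnt (fun ω => ¬ reaches ω a s ∧ ¬ reaches ω s b) + 2 * 2 ^ (M - (3 * n - 6)) : ℕ) : ℝ) := by
        exact_mod_cast this
      push_cast at hcast
      linarith
    calc ((1:ℝ)/2) ^ (2 * n - 3) * (3 - 2 * (1/2) ^ (n - 3)) * 2 ^ M
        = 3 * ((1/2) ^ (2 * n - 3) * 2 ^ M) -
          2 * (((1/2) ^ (2 * n - 3) * (1/2) ^ (n - 3)) * 2 ^ M) := by ring
      _ = 3 * 2 ^ (M - (2 * n - 3)) - 2 * 2 ^ (M - (3 * n - 6)) := by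
          rw [half_mul_pow hd1le, ← pow_add]
          rw [show 2 * n - 3 + (n - 3) = 3 * n - 6 by omega]
          rw [half_mul_pow hd12le]
      _ ≤ _ := keyR

end LowerBound
section UpperSem
open Finset
variable {n : ℕ} {ω : Orient n} {a s b : Fin n}

lemma AB_event (has : a ≠ s) (hsb : s ≠ b)
    (hA : ¬ reaches ω a s) (hB : ¬ reaches ω s b) :
    rEvent (rk (reachSet ω a) (reachSet ω s \ reachSet ω a) ((reachSet ω s)ᶜ)) ω := by
  set S := reachSet ω a with hS
  set T := reachSet ω s with hT
  have hST : S ⊆ T := by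
    intro v hv
    have hnd : ¬ dir ω a s := fun hd => hA (Relation.TransGen.single hd)
    have hdsa : dir ω s a := dir_total has hnd
    rw [hS, mem_reachSet] at hv
    rw [hT, mem_reachSet]
    rcases hv with rfl | hv
    · exact Or.inr (Relation.TransGen.single hdsa)
    · exact Or.inr ((Relation.TransGen.single hdsa).trans hv)
  rw [rEvent_iff_dir]
  intro u v hlt
  rcases rk_class S (T \ S) (Tᶜ) u with
    ⟨m1, r1⟩ | ⟨m1a, m1, r1⟩ | ⟨m1a, m1b, m1, r1⟩ | ⟨m1a, m1b, m1c, r1⟩ <;>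
    rcases rk_class S (T \ S) (Tᶜ) v with
      ⟨m2, r2⟩ | ⟨m2a, m2, r2⟩ | ⟨m2a, m2b, m2, r2⟩ | ⟨m2a, m2b, m2c, r2⟩ <;>
    rw [r1, r2] at hlt <;> try omega
  all_goals try {
    exfalso
    rw [mem_compl] at m1c
    rw [not_not] at m1c
    exact (m1b (mem_sdiff.mpr ⟨m1c, m1a⟩)) }
  · -- u ∈ T \ S, v ∈ S
    have hus : u ∉ S := (mem_sdiff.mp m1).2
    have hne : u ≠ v := fun h => hus (h ▸ m2)
    by_contra hnd
    exact hus (reachSet_closed m2 (dir_total hne hnd))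
  · -- u ∈ Tᶜ, v ∈ S
    have hut : u ∉ T := mem_compl.mp m1
    have hne : u ≠ v := fun h => hut (h ▸ hST m2)
    by_contra hnd
    exact hut (hST (reachSet_closed m2 (dir_total hne hnd)))
  · -- u ∈ Tᶜ, v ∈ T \ S
    have hut : u ∉ T := mem_compl.mp m1
    have hvt : v ∈ T := (mem_sdiff.mp m2).1
    have hne : u ≠ v := fun h => hut (h ▸ hvt)
    by_contra hnd
    exact hut (reachSet_closed hvt (dir_total hne hnd))

lemma pair_d_card (S T : Finset (Fin n)) (hST : S ⊆ T) :
    (rDiff (rk S (T \ S) (Tᶜ))).card =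
      S.card * (T \ S).card + S.card * (Tᶜ).card + (T \ S).card * (Tᶜ).card := by
  have h1 : Disjoint S (T \ S) := Finset.disjoint_sdiff
  have h2 : Disjoint S (Tᶜ) := by
    rw [Finset.disjoint_left]
    intro v hv hv'
    exact (mem_compl.mp hv') (hST hv)
  have h3 : Disjoint (T \ S) (Tᶜ) := by
    rw [Finset.disjoint_left]
    intro v hv hv'
    exact (mem_compl.mp hv') ((mem_sdiff.mp hv).1)
  rw [d_rk _ _ _ h1 h2 h3]
  have hz : (S ∪ (T \ S) ∪ Tᶜ)ᶜ = ∅ := by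
    rw [Finset.union_sdiff_of_subset hST, Finset.union_compl, Finset.compl_univ]
  rw [hz, Finset.card_empty]
  ring

end UpperSem
section UpperSum
open Finset
variable {n : ℕ}

noncomputable def Wt (m : ℕ) (q : Σ _ : Finset (Fin n), Finset (Fin n)) : ℝ :=
  (1/2) ^ ((q.2.card + 1) * (q.1.card + 1 - q.2.card) + (q.1.card + 2) * (m + 1 - q.1.card))

def gmap (a s : Fin n) (p : Finset (Fin n) × Finset (Fin n)) :
    Σ _ : Finset (Fin n), Finset (Fin n) :=
  ⟨p.2 \ {a, s}, p.1.erase a⟩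

lemma Wt_nonneg (m : ℕ) (q : Σ _ : Finset (Fin n), Finset (Fin n)) : 0 ≤ Wt m q := by
  unfold Wt; positivity

lemma sumJ (m : ℕ) (X : Finset (Fin n)) (hX : X.card = m) :
    ∑ q ∈ X.powerset.sigma (fun T' => T'.powerset), Wt m q
      = ∑ j ∈ range (m + 1), ∑ i ∈ range (j + 1),
          (m.choose j : ℝ) * (j.choose i : ℝ) *
            (1/2) ^ ((i + 1) * (j + 1 - i) + (j + 2) * (m + 1 - j)) := by
  classical
  rw [Finset.sum_sigma]
  have e1 : ∀ T' ∈ X.powerset, ∑ S' ∈ T'.powerset, Wt m (⟨T', S'⟩ : Σ _ : Finset (Fin n), Finset (Fin n))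
      = ∑ i ∈ range (T'.card + 1), (T'.card.choose i : ℝ) *
          (1/2) ^ ((i + 1) * (T'.card + 1 - i) + (T'.card + 2) * (m + 1 - T'.card)) := by
    intro T' _
    rw [Finset.sum_powerset]
    apply Finset.sum_congr rfl
    intro i _
    have hconst : ∀ S' ∈ Finset.powersetCard i T',
        Wt m (⟨T', S'⟩ : Σ _ : Finset (Fin n), Finset (Fin n))
          = (1/2) ^ ((i + 1) * (T'.card + 1 - i) + (T'.card + 2) * (m + 1 - T'.card)) := by
      intro S' hS'
      unfold Wt
      rw [(Finset.mem_powersetCard.mp hS').2]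
    rw [Finset.sum_congr rfl hconst, Finset.sum_const, Finset.card_powersetCard]
    simp [nsmul_eq_mul]
  rw [Finset.sum_congr rfl e1]
  have e2 : ∀ T' ∈ X.powerset, ∑ i ∈ range (T'.card + 1), (T'.card.choose i : ℝ) *
      (1/2) ^ ((i + 1) * (T'.card + 1 - i) + (T'.card + 2) * (m + 1 - T'.card))
      = (fun j => ∑ i ∈ range (j + 1), (j.choose i : ℝ) *
          (1/2) ^ ((i + 1) * (j + 1 - i) + (j + 2) * (m + 1 - j))) T'.card := by
    intro T' _
    rfl
  rw [Finset.sum_congr rfl e2, Finset.sum_powerset]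
  rw [hX]
  apply Finset.sum_congr rfl
  intro j _
  have hconst : ∀ T' ∈ Finset.powersetCard j X,
      (fun j => ∑ i ∈ range (j + 1), (j.choose i : ℝ) *
          (1/2) ^ ((i + 1) * (j + 1 - i) + (j + 2) * (m + 1 - j))) T'.card
        = ∑ i ∈ range (j + 1), (j.choose i : ℝ) *
            (1/2) ^ ((i + 1) * (j + 1 - i) + (j + 2) * (m + 1 - j)) := by
    intro T' hT'
    rw [(Finset.mem_powersetCard.mp hT').2]
  rw [Finset.sum_congr rfl hconst, Finset.sum_const, Finset.card_powersetCard, hX]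
  rw [nsmul_eq_mul, Finset.mul_sum]
  apply Finset.sum_congr rfl
  intro i _
  ring

end UpperSum
section UpperBound
open Finset

lemma pow_ratio {d M : ℕ} (h : d ≤ M) : ((2:ℝ)^(M-d))/2^M = (1/2)^d := by
  rw [← half_mul_pow h, mul_div_assoc, div_self (by positivity), mul_one]

set_option maxHeartbeats 1000000 in
lemma upper_bound (n : ℕ) (hn : 3 ≤ n) (a s b : Fin n)
    (has : a ≠ s) (hab : a ≠ b) (hsb : s ≠ b) :
    Pr n (fun ω => ¬ reaches ω a s ∧ ¬ reaches ω s b) ≤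
      ((1 : ℝ) / 2) ^ (2 * n - 3) * (3 + 20.8 * (7 / 8) ^ (n - 3)) := by
  classical
  set M := Fintype.card (Edge n) with hM
  set I : Finset (Finset (Fin n) × Finset (Fin n)) :=
    Finset.filter (fun p => a ∈ p.1 ∧ s ∉ p.1 ∧ s ∈ p.2 ∧ b ∉ p.2 ∧ p.1 ⊆ p.2) Finset.univ
    with hI
  have hmemI : ∀ p ∈ I, a ∈ p.1 ∧ s ∉ p.1 ∧ s ∈ p.2 ∧ b ∉ p.2 ∧ p.1 ⊆ p.2 := by
    intro p hp
    rw [hI, mem_filter] at hp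
    exact hp.2
  -- inclusion
  have hincl : ∀ ω : Orient n, (¬ reaches ω a s ∧ ¬ reaches ω s b) →
      ∃ p ∈ I, rEvent (rk p.1 (p.2 \ p.1) (p.2ᶜ)) ω := by
    intro ω h
    refine ⟨(reachSet ω a, reachSet ω s), ?_, AB_event has hsb h.1 h.2⟩
    rw [hI, mem_filter]
    have hST : reachSet ω a ⊆ reachSet ω s := by
      intro v hv
      have hnd : ¬ dir ω a s := fun hd => h.1 (Relation.TransGen.single hd)
      have hdsa : dir ω s a := dir_total has hnd
      rw [mem_reachSet] at hv
      rw [mem_reachSet]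
      rcases hv with rfl | hv
      · exact Or.inr (Relation.TransGen.single hdsa)
      · exact Or.inr ((Relation.TransGen.single hdsa).trans hv)
    refine ⟨mem_univ _, mem_reachSet_self, ?_, mem_reachSet_self, ?_, hST⟩
    · intro hmem
      rw [mem_reachSet] at hmem
      rcases hmem with h' | h'
      · exact has h'.symm
      · exact h.1 h'
    · intro hmem
      rw [mem_reachSet] at hmem
      rcases hmem with h' | h'
      · exact hsb h'.symm
      · exact h.2 h'
  have hcnt : cnt (fun ω => ¬ reaches ω a s ∧ ¬ reaches ω s b) ≤
      ∑ p ∈ I, cnt (fun ω => rEvent (rk p.1 (p.2 \ p.1) (p.2ᶜ)) ω) :=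
    cnt_le_sum I _ _ hincl
  -- real comparison
  rw [Pr_eq, ← hM]
  have step1 : (cnt (fun ω => ¬ reaches ω a s ∧ ¬ reaches ω s b) : ℝ) / 2 ^ M
      ≤ ∑ p ∈ I, ((1:ℝ)/2) ^ ((rDiff (rk p.1 (p.2 \ p.1) (p.2ᶜ))).card) := by
    have h1 : (cnt (fun ω => ¬ reaches ω a s ∧ ¬ reaches ω s b) : ℝ)
        ≤ ∑ p ∈ I, ((2:ℝ) ^ (M - (rDiff (rk p.1 (p.2 \ p.1) (p.2ᶜ))).card)) := by
      calc (cnt (fun ω => ¬ reaches ω a s ∧ ¬ reaches ω s b) : ℝ)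
          ≤ ((∑ p ∈ I, cnt (fun ω => rEvent (rk p.1 (p.2 \ p.1) (p.2ᶜ)) ω) : ℕ) : ℝ) := by
            exact_mod_cast hcnt
        _ = ∑ p ∈ I, ((2:ℝ) ^ (M - (rDiff (rk p.1 (p.2 \ p.1) (p.2ᶜ))).card)) := by
            push_cast
            apply Finset.sum_congr rfl
            intro p _
            rw [cnt_rEvent]
            push_cast
            rfl
    rw [div_le_iff₀ (by positivity)]
    calc (cnt (fun ω => ¬ reaches ω a s ∧ ¬ reaches ω s b) : ℝ)
        ≤ ∑ p ∈ I, ((2:ℝ) ^ (M - (rDiff (rk p.1 (p.2 \ p.1) (p.2ᶜ))).card)) := h1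
      _ = (∑ p ∈ I, ((1:ℝ)/2) ^ ((rDiff (rk p.1 (p.2 \ p.1) (p.2ᶜ))).card)) * 2 ^ M := by
          rw [Finset.sum_mul]
          apply Finset.sum_congr rfl
          intro p _
          rw [half_mul_pow (rDiff_card_le _)]
  -- identify weights
  set m := n - 3 with hm
  have hweight : ∀ p ∈ I, ((1:ℝ)/2) ^ ((rDiff (rk p.1 (p.2 \ p.1) (p.2ᶜ))).card)
      = Wt m (gmap a s p) := by
    intro p hp
    obtain ⟨ha1, hs1, hs2, hb2, hsub⟩ := hmemI p hp
    have hasT : ({a, s} : Finset (Fin n)) ⊆ p.2 := by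
      intro v hv
      rcases Finset.mem_insert.mp hv with rfl | hv
      · exact hsub ha1
      · exact (Finset.mem_singleton.mp hv) ▸ hs2
    have hk1 : 1 ≤ p.1.card := Finset.card_pos.mpr ⟨a, ha1⟩
    have hkt : p.1.card < p.2.card := by
      apply Finset.card_lt_card
      rw [Finset.ssubset_iff_of_subset hsub]
      exact ⟨s, hs2, hs1⟩
    have htn : p.2.card ≤ n - 1 := by
      have hsubb : p.2 ⊆ Finset.univ.erase b := by
        intro v hv
        rw [Finset.mem_erase]
        exact ⟨fun hc => hb2 (hc ▸ hv), mem_univ _⟩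
      calc p.2.card ≤ (Finset.univ.erase b).card := Finset.card_le_card hsubb
        _ = n - 1 := by rw [Finset.card_erase_of_mem (mem_univ _), card_univ, Fintype.card_fin]
    have hcas : ({a, s} : Finset (Fin n)).card = 2 := by
      rw [card_insert_of_notMem (by simp [has]), card_singleton]
    have hc1 : (p.1.erase a).card = p.1.card - 1 := Finset.card_erase_of_mem ha1
    have hc2 : (p.2 \ {a, s}).card = p.2.card - 2 := by
      rw [Finset.card_sdiff_of_subset hasT, hcas]
    have hc3 : (p.2 \ p.1).card = p.2.card - p.1.card := Finset.card_sdiff_of_subset hsub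
    have hc4 : (p.2ᶜ).card = n - p.2.card := by
      rw [Finset.card_compl, Fintype.card_fin]
    rw [pair_d_card p.1 p.2 hsub]
    unfold Wt gmap
    simp only
    rw [hc1, hc2, hc3, hc4]
    congr 1
    -- ℕ identity
    have e1 : p.1.card - 1 + 1 = p.1.card := by omega
    have e2 : p.2.card - 2 + 1 - (p.1.card - 1) = p.2.card - p.1.card := by omega
    have e3 : p.2.card - 2 + 2 = p.2.card := by omega
    have e4 : m + 1 - (p.2.card - 2) = n - p.2.card := by omega
    rw [e1, e2, e3, e4]
    have e5 : p.1.card * (n - p.2.card) + (p.2.card - p.1.card) * (n - p.2.card)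
        = p.2.card * (n - p.2.card) := by
      rw [← Nat.add_mul]
      congr 1
      omega
    calc p.1.card * (p.2.card - p.1.card) + p.1.card * (n - p.2.card) +
          (p.2.card - p.1.card) * (n - p.2.card)
        = p.1.card * (p.2.card - p.1.card) +
            (p.1.card * (n - p.2.card) + (p.2.card - p.1.card) * (n - p.2.card)) := by ring
      _ = p.1.card * (p.2.card - p.1.card) + p.2.card * (n - p.2.card) := by rw [e5]
  -- injectivity of gmap on I
  have hinj : ∀ p ∈ I, ∀ p' ∈ I, gmap a s p = gmap a s p' → p = p' := by
    intro p hp p' hp' heq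
    obtain ⟨ha1, hs1, hs2, hb2, hsub⟩ := hmemI p hp
    obtain ⟨ha1', hs1', hs2', hb2', hsub'⟩ := hmemI p' hp'
    unfold gmap at heq
    have h1 : p.2 \ {a, s} = p'.2 \ {a, s} := congrArg Sigma.fst heq
    have h2 : p.1.erase a = p'.1.erase a := by
      have := (Sigma.mk.inj_iff.mp heq).2
      exact eq_of_heq this
    have hasT : ({a, s} : Finset (Fin n)) ⊆ p.2 := by
      intro v hv
      rcases Finset.mem_insert.mp hv with rfl | hv
      · exact hsub ha1
      · exact (Finset.mem_singleton.mp hv) ▸ hs2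
    have hasT' : ({a, s} : Finset (Fin n)) ⊆ p'.2 := by
      intro v hv
      rcases Finset.mem_insert.mp hv with rfl | hv
      · exact hsub' ha1'
      · exact (Finset.mem_singleton.mp hv) ▸ hs2'
    have hp2 : p.2 = p'.2 := by
      rw [← Finset.sdiff_union_of_subset hasT, ← Finset.sdiff_union_of_subset hasT', h1]
    have hp1 : p.1 = p'.1 := by
      rw [← Finset.insert_erase ha1, ← Finset.insert_erase ha1', h2]
    exact Prod.ext hp1 hp2
  -- image inside J
  set X₀ : Finset (Fin n) := Finset.univ \ {a, s, b} with hX₀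
  have hX₀card : X₀.card = m := by
    rw [hX₀, card_sdiff_of_subset (subset_univ _), card_univ, Fintype.card_fin]
    have : ({a, s, b} : Finset (Fin n)).card = 3 := by
      rw [card_insert_of_notMem (by simp [has, hab]),
        card_insert_of_notMem (by simp [hsb]), card_singleton]
    rw [this]
  have himg : I.image (gmap a s) ⊆ X₀.powerset.sigma (fun T' => T'.powerset) := by
    intro q hq
    obtain ⟨p, hp, rfl⟩ := Finset.mem_image.mp hq
    obtain ⟨ha1, hs1, hs2, hb2, hsub⟩ := hmemI p hp
    rw [Finset.mem_sigma]
    unfold gmap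
    constructor
    · rw [Finset.mem_powerset]
      intro v hv
      rw [Finset.mem_sdiff] at hv
      simp only [Finset.mem_insert, Finset.mem_singleton, not_or] at hv
      rw [hX₀, Finset.mem_sdiff]
      simp only [Finset.mem_insert, Finset.mem_singleton, not_or]
      exact ⟨mem_univ _, hv.2.1, hv.2.2, fun hc => hb2 (hc ▸ hv.1)⟩
    · rw [Finset.mem_powerset]
      intro v hv
      rw [Finset.mem_erase] at hv
      rw [Finset.mem_sdiff]
      simp only [Finset.mem_insert, Finset.mem_singleton, not_or]
      exact ⟨hsub hv.2, hv.1, fun hc => hs1 (hc ▸ hv.2)⟩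
  -- assemble
  have step2 : ∑ p ∈ I, ((1:ℝ)/2) ^ ((rDiff (rk p.1 (p.2 \ p.1) (p.2ᶜ))).card)
      ≤ (1/2) ^ (2 * m + 3) * (3 + 20.8 * (7/8) ^ m) := by
    calc ∑ p ∈ I, ((1:ℝ)/2) ^ ((rDiff (rk p.1 (p.2 \ p.1) (p.2ᶜ))).card)
        = ∑ p ∈ I, Wt m (gmap a s p) := Finset.sum_congr rfl hweight
      _ = ∑ q ∈ I.image (gmap a s), Wt m q := (Finset.sum_image hinj).symm
      _ ≤ ∑ q ∈ X₀.powerset.sigma (fun T' => T'.powerset), Wt m q := by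
          apply Finset.sum_le_sum_of_subset_of_nonneg himg
          intro q _ _
          exact Wt_nonneg m q
      _ = ∑ j ∈ range (m + 1), ∑ i ∈ range (j + 1),
            (m.choose j : ℝ) * (j.choose i : ℝ) *
              (1/2) ^ ((i + 1) * (j + 1 - i) + (j + 2) * (m + 1 - j)) := sumJ m X₀ hX₀card
      _ ≤ (1/2) ^ (2 * m + 3) * (3 + 20.8 * (7/8) ^ m) := arith_main m
  have hfin : ((1:ℝ)/2) ^ (2 * m + 3) * (3 + 20.8 * (7/8) ^ m)
      = (1/2) ^ (2 * n - 3) * (3 + 20.8 * (7/8) ^ (n - 3)) := by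
    rw [hm]
    congr 2
    omega
  linarith [step1, step2, hfin ▸ step2]

end UpperBound

theorem joint_no_path_prob_bounds (n : ℕ) (hn : 3 ≤ n) (a s b : Fin n)
    (has : a ≠ s) (hab : a ≠ b) (hsb : s ≠ b) :
    ((1 : ℝ) / 2) ^ (2 * n - 3) * (3 - 2 * (1 / 2) ^ (n - 3)) ≤
        Pr n (fun ω => ¬ reaches ω a s ∧ ¬ reaches ω s b) ∧
      Pr n (fun ω => ¬ reaches ω a s ∧ ¬ reaches ω s b) ≤
        ((1 : ℝ) / 2) ^ (2 * n - 3) * (3 + 20.8 * (7 / 8) ^ (n - 3)) := by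
  exact ⟨lower_bound n hn a s b has hab hsb, upper_bound n hn a s b has hab hsb⟩
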